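/- Let m,n ≥ 2 and a,b,h,A,B,p ≥ 0 and q be integers with a ≤ m-1, b ≤ n-1, B ≤ n-1, r := (a+1)(b+1)-1-h, 0 < r < (m-1)(n-1), and suppose (a,b) maximizes (m-a'-1)(n-b'-1) over pairs (a',b') with 0 ≤ a' ≤ m-1, 0 ≤ b' ≤ n-1, (a'+1)(b'+1)-1-r ≥ 0. Assume A+2-m ≤ 0, q > 0, B ≥ p, A+2-m ≤ q ≤ A, and p(m-1) + (q - (A+2-m)) = an + bm - h + m - An - B - 2. Then t₁ := (A+1)p + q satisfies t₁ ≤ r. -/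
import Mathlib


/-- Case (2) of the key combinatorial claim: if `q > 0` and `B ≥ p`, then
`t₁ = (A+1)p + q ≤ r = (a+1)(b+1)-1-h`. -/
theorem case_two (m n a b h A B p q : ℤ) (hm : 2 ≤ m) (hn : 2 ≤ n)
    (ha0 : 0 ≤ a) (hb0 : 0 ≤ b) (hh : 0 ≤ h) (hA : 0 ≤ A) (hB0 : 0 ≤ B) (hp0 : 0 ≤ p)
    (ha1 : a ≤ m - 1) (hb1 : b ≤ n - 1) (hB1 : B ≤ n - 1)
    (hr0 : 0 < (a + 1) * (b + 1) - 1 - h)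
    (hr1 : (a + 1) * (b + 1) - 1 - h < (m - 1) * (n - 1))
    (hmax : ∀ a' b' : ℤ, 0 ≤ a' → a' ≤ m - 1 → 0 ≤ b' → b' ≤ n - 1 →
      0 ≤ (a' + 1) * (b' + 1) - 1 - ((a + 1) * (b + 1) - 1 - h) →
      (m - a' - 1) * (n - b' - 1) ≤ (m - a - 1) * (n - b - 1))
    (hAm : A + 2 - m ≤ 0) (hq0 : 0 < q) (hBp : p ≤ B)
    (hq1 : A + 2 - m ≤ q) (hq2 : q ≤ A)
    (heq : p * (m - 1) + (q - (A + 2 - m)) = a * n + b * m - h + m - A * n - B - 2) :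
    (A + 1) * p + q ≤ (a + 1) * (b + 1) - 1 - h := by
  rcases le_or_gt ((a + 1) * (b + 1) - 1 - h) ((A + 1) * (p + 1) - 1) with hc | hc
  · have h1 := hmax A p hA (by linarith) hp0 (by linarith) (by linarith)
    nlinarith [h1, heq, hBp]
  · nlinarith [hq2, hc, hp0]
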